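/- Let z > 1 be real, set ω = z − √(z² − 1), and let U_n denote the Chebyshev polynomial of the second kind of degree n. Then for all n, m ∈ ℕ, ∫_{−1}^{1} U_n(λ)·U_m(λ)·√(1 − λ²)/(λ − z) dλ = π·(ω^{n+m+2} − ω^{|n−m|})/(2√(z² − 1)). -/

import Mathlib

open Real intervalIntegral Set

lemma cos_ne_z {z : ℝ} (hz : 1 < z) (x : ℝ) : Real.cos x - z ≠ 0 :=
  sub_ne_zero.mpr ((Real.cos_le_one x).trans_lt hz).ne

lemma contC {z : ℝ} (hz : 1 < z) (k : ℝ) :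
    Continuous (fun θ : ℝ => Real.cos (k * θ) / (Real.cos θ - z)) :=
  (Real.continuous_cos.comp (continuous_const.mul continuous_id)).div
    (Real.continuous_cos.sub continuous_const) (cos_ne_z hz)

lemma intC0 {z s : ℝ} (hz : 1 < z) (hs0 : 0 < s) (hs2 : s ^ 2 = z ^ 2 - 1) :
    ∫ θ in (0:ℝ)..π, 1 / (Real.cos θ - z) = -(π / s) := by
  set w : ℝ := z - s with hw
  have hw0 : 0 < w := by nlinarith [sq_nonneg (z - s)]
  have hw1 : w < 1 := by nlinarith
  have hq : w ^ 2 = 2 * z * w - 1 := by rw [hw]; nlinarith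
  have hD : ∀ θ : ℝ, 1 - w * Real.cos θ ≠ 0 := by
    intro θ
    nlinarith [Real.cos_le_one θ, Real.neg_one_le_cos θ]
  have key : ∀ θ : ℝ, HasDerivAt
      (fun t : ℝ => -(1/s) * (t + 2 * Real.arctan (w * Real.sin t / (1 - w * Real.cos t))))
      (1 / (Real.cos θ - z)) θ := by
    intro θ
    have hu := (((Real.hasDerivAt_sin θ).const_mul w).div
        (((Real.hasDerivAt_cos θ).const_mul w).const_sub 1) (hD θ))
    have h3 := ((hasDerivAt_id θ).add (hu.arctan.const_mul 2)).const_mul (-(1/s))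
    convert h3 using 1
    · rfl
    · rfl
    · rfl
    set c := Real.cos θ with hc
    set t := Real.sin θ with ht
    have hsc : t ^ 2 + c ^ 2 = 1 := Real.sin_sq_add_cos_sq θ
    have hDθ : (1:ℝ) - w * c ≠ 0 := hD θ
    have hcz : c - z ≠ 0 := cos_ne_z hz θ
    have hzc : z - c ≠ 0 := fun h => hcz (by linarith [sub_eq_zero.mp h])
    have e2 : (0:ℝ) < 1 - 2*w*c + w^2 := by nlinarith [Real.cos_le_one θ]
    have e1 : (1:ℝ) + (w * t / (1 - w * c)) ^ 2 = (1 - 2*w*c + w^2) / (1 - w*c)^2 := by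
      field_simp
      linear_combination w^2 * hsc
    have e5 : w * c * (1 - w * c) - w * t * -(w * -t) = w*c - w^2 := by
      linear_combination (-w^2) * hsc
    have e6 : 1 / ((1 - 2*w*c + w^2) / (1 - w*c)^2) * ((w*c - w^2) / (1 - w*c)^2)
        = (w*c - w^2) / (1 - 2*w*c + w^2) := by
      rw [one_div_div]
      field_simp
    have e3 : 1 - 2*w*c + w^2 = 2*w*(z - c) := by linarith [hq]
    have e7 : 1 + 2*((w*c - w^2) / (1 - 2*w*c + w^2)) = s/(z - c) := by
      rw [e3, hw]
      have hzs : z - s ≠ 0 := by rw [← hw]; exact hw0.ne'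
      field_simp
      ring
    simp only [Pi.div_apply, ← hc, ← ht]
    rw [e1, e5, e6, e7]
    field_simp
    ring
  have hcont : Continuous fun θ : ℝ => 1 / (Real.cos θ - z) :=
    continuous_const.div (Real.continuous_cos.sub continuous_const) (cos_ne_z hz)
  rw [integral_eq_sub_of_hasDerivAt (fun θ _ => key θ) (hcont.intervalIntegrable _ _)]
  simp [Real.sin_pi]
  ring

lemma int_cos_mul (c : ℝ) (hc : c ≠ 0) :
    ∫ θ in (0:ℝ)..π, Real.cos (c * θ) = Real.sin (c * π) / c := by
  rw [intervalIntegral.integral_comp_mul_left (fun x => Real.cos x) hc]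
  simp [integral_cos]
  ring

lemma intC {z s : ℝ} (hz : 1 < z) (hs0 : 0 < s) (hs2 : s ^ 2 = z ^ 2 - 1) (k : ℕ) :
    ∫ θ in (0:ℝ)..π, Real.cos ((k:ℝ) * θ) / (Real.cos θ - z) = -(π * (z - s)^k / s) := by
  induction k using Nat.twoStepInduction with
  | zero =>
    simp only [Nat.cast_zero, zero_mul, Real.cos_zero, pow_zero]
    rw [intC0 hz hs0 hs2]; ring
  | one =>
    have e : ∀ θ : ℝ, Real.cos ((1:ℕ) * θ) / (Real.cos θ - z)
        = 1 + z * (1 / (Real.cos θ - z)) := by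
      intro θ
      have h := cos_ne_z hz θ
      push_cast
      field_simp
      ring
    rw [integral_congr (fun θ _ => e θ)]
    have hcont : Continuous fun θ : ℝ => 1 / (Real.cos θ - z) :=
      continuous_const.div (Real.continuous_cos.sub continuous_const) (cos_ne_z hz)
    rw [integral_add (intervalIntegrable_const) ((show Continuous fun θ : ℝ => z * (1/(Real.cos θ - z)) from continuous_const.mul hcont).intervalIntegrable _ _),
      intervalIntegral.integral_const_mul, intC0 hz hs0 hs2]
    simp
    field_simp
    ring
  | more k ih0 ih1 =>
    have hcz := cos_ne_z hz
    have e : ∀ θ : ℝ, Real.cos ((((k+2):ℕ):ℝ) * θ) / (Real.cos θ - z)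
        = (2 * Real.cos (((k:ℝ)+1) * θ)
            + 2 * z * (Real.cos ((((k+1):ℕ):ℝ) * θ) / (Real.cos θ - z)))
          - Real.cos (((k:ℕ):ℝ) * θ) / (Real.cos θ - z) := by
      intro θ
      have h := hcz θ
      have key : Real.cos (((k:ℝ)+2) * θ)
          = 2 * Real.cos θ * Real.cos (((k:ℝ)+1) * θ) - Real.cos ((k:ℝ) * θ) := by
        have h1 : ((k:ℝ)+2)*θ = ((k:ℝ)+1)*θ + θ := by ring
        have h2 : (k:ℝ)*θ = ((k:ℝ)+1)*θ - θ := by ring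
        rw [h1, h2, Real.cos_add, Real.cos_sub]; ring
      push_cast
      rw [key]
      field_simp
      ring
    rw [integral_congr (fun θ _ => e θ)]
    have c1 : Continuous fun θ : ℝ => 2 * Real.cos (((k:ℝ)+1) * θ) :=
      continuous_const.mul (Real.continuous_cos.comp (continuous_const.mul continuous_id))
    have c2 : Continuous fun θ : ℝ =>
        2 * z * (Real.cos ((((k+1):ℕ):ℝ) * θ) / (Real.cos θ - z)) :=
      continuous_const.mul (contC hz _)
    rw [integral_sub (c1.intervalIntegrable _ _ |>.add (c2.intervalIntegrable _ _))
        ((contC hz _).intervalIntegrable _ _),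
      integral_add (c1.intervalIntegrable _ _) (c2.intervalIntegrable _ _),
      integral_const_mul, integral_const_mul, ih0, ih1,
      int_cos_mul ((k:ℝ)+1) (by positivity)]
    have : Real.sin (((k:ℝ)+1) * π) = 0 := by
      have := Real.sin_nat_mul_pi (k+1)
      push_cast at this ⊢
      convert this using 2
    rw [this]
    have hq : (z-s) ^ 2 = 2 * z * (z-s) - 1 := by nlinarith
    have hs : s ≠ 0 := hs0.ne'
    have hzs : (z - s)^(k+2) = 2*z*(z-s)^(k+1) - (z-s)^k := by
      have h2 : (z-s)^(k+2) = (z-s)^k * (z-s)^2 := by ring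
      rw [h2, hq]; ring
    rw [hzs]
    field_simp
    ring

theorem stmt12 (z : ℝ) (hz : 1 < z) (n m : ℕ) :
    ∫ x in (-1 : ℝ)..1,
        (Polynomial.Chebyshev.U ℝ (n : ℤ)).eval x *
          (Polynomial.Chebyshev.U ℝ (m : ℤ)).eval x * Real.sqrt (1 - x ^ 2) / (x - z) =
      Real.pi *
        ((z - Real.sqrt (z ^ 2 - 1)) ^ (n + m + 2) -
          (z - Real.sqrt (z ^ 2 - 1)) ^ ((n : ℤ) - (m : ℤ)).natAbs) /
        (2 * Real.sqrt (z ^ 2 - 1)) := by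
  set s : ℝ := Real.sqrt (z ^ 2 - 1) with hsdef
  have hz2 : (0:ℝ) < z ^ 2 - 1 := by nlinarith
  have hs0 : 0 < s := Real.sqrt_pos.mpr hz2
  have hs2 : s ^ 2 = z ^ 2 - 1 := Real.sq_sqrt hz2.le
  set d : ℕ := ((n : ℤ) - (m : ℤ)).natAbs with hddef
  set F : ℝ → ℝ := fun x => (Polynomial.Chebyshev.U ℝ (n : ℤ)).eval x *
      (Polynomial.Chebyshev.U ℝ (m : ℤ)).eval x * Real.sqrt (1 - x ^ 2) / (x - z) with hFdef
  -- continuity of F on [-1,1]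
  have hFcont : ContinuousOn F (Icc (-1:ℝ) 1) := by
    apply ContinuousOn.div
    · exact (((Polynomial.continuous _).mul (Polynomial.continuous _)).mul
        (Real.continuous_sqrt.comp (by continuity))).continuousOn
    · exact (continuous_id.sub continuous_const).continuousOn
    · intro x hx
      exact sub_ne_zero.mpr (by nlinarith [hx.2] : x ≠ z)
  -- substitution x = cos θ
  have himg : Real.cos '' (Set.uIcc π 0) ⊆ Icc (-1:ℝ) 1 := by
    rintro y ⟨x, -, rfl⟩
    exact ⟨Real.neg_one_le_cos x, Real.cos_le_one x⟩
  have sub := intervalIntegral.integral_comp_smul_deriv' (f := Real.cos)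
      (f' := fun t => -Real.sin t) (a := π) (b := 0) (g := F)
      (fun x _ => Real.hasDerivAt_cos x) (Real.continuous_sin.neg.continuousOn)
      (hFcont.mono himg)
  rw [Real.cos_pi, Real.cos_zero] at sub
  have step1 : ∫ x in (-1:ℝ)..1, F x = ∫ θ in (0:ℝ)..π, Real.sin θ * F (Real.cos θ) := by
    rw [← sub, intervalIntegral.integral_symm, ← intervalIntegral.integral_neg]
    apply intervalIntegral.integral_congr
    intro x _
    simp only [Function.comp, smul_eq_mul]
    ring
  rw [step1]
  -- pointwise identity on [0, π]
  have key : ∀ θ ∈ uIcc (0:ℝ) π, Real.sin θ * F (Real.cos θ)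
      = Real.cos ((d:ℝ) * θ) / (Real.cos θ - z) * (1/2)
        - Real.cos ((((n+m+2):ℕ):ℝ) * θ) / (Real.cos θ - z) * (1/2) := by
    intro θ hθ
    rw [uIcc_of_le Real.pi_pos.le] at hθ
    have hsin : 0 ≤ Real.sin θ := Real.sin_nonneg_of_nonneg_of_le_pi hθ.1 hθ.2
    have hsqrt : Real.sqrt (1 - Real.cos θ ^ 2) = Real.sin θ := by
      rw [show (1:ℝ) - Real.cos θ ^ 2 = Real.sin θ ^ 2 by
        linear_combination -Real.sin_sq_add_cos_sq θ, Real.sqrt_sq hsin]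
    have hcz := cos_ne_z hz θ
    have hUn := Polynomial.Chebyshev.U_real_cos θ (n : ℤ)
    have hUm := Polynomial.Chebyshev.U_real_cos θ (m : ℤ)
    push_cast at hUn hUm
    have expand : Real.sin θ * F (Real.cos θ)
        = (((Polynomial.Chebyshev.U ℝ (n:ℤ)).eval (Real.cos θ) * Real.sin θ)
          * ((Polynomial.Chebyshev.U ℝ (m:ℤ)).eval (Real.cos θ) * Real.sin θ))
          / (Real.cos θ - z) := by
      rw [hFdef]
      simp only
      rw [hsqrt]
      ring
    rw [expand, hUn, hUm]
    have hpq := Real.cos_sub_cos (((n:ℝ) - m) * θ) (((n:ℝ) + m + 2) * θ)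
    rw [show ((((n:ℝ) - m) * θ + ((n:ℝ) + m + 2) * θ)/2) = ((n:ℝ)+1)*θ by ring,
        show ((((n:ℝ) - m) * θ - ((n:ℝ) + m + 2) * θ)/2) = -(((m:ℝ)+1)*θ) by ring,
        Real.sin_neg] at hpq
    have hdcast : (d:ℝ) = |(n:ℝ) - m| := by
      rw [hddef, Nat.cast_natAbs]
      push_cast
      rfl
    have hcosd : Real.cos ((d:ℝ) * θ) = Real.cos (((n:ℝ) - m) * θ) := by
      rw [hdcast]
      rcases abs_cases ((n:ℝ) - m) with ⟨h, -⟩ | ⟨h, -⟩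
      · rw [h]
      · rw [h, neg_mul, Real.cos_neg]
    rw [hcosd]
    push_cast
    field_simp
    have hpq' : Real.cos (θ * ((n:ℝ) - m)) - Real.cos (θ * ((n:ℝ) + m + 2))
        = -2 * Real.sin (((n:ℝ) + 1) * θ) * -Real.sin (θ * ((m:ℝ) + 1)) := by
      rw [mul_comm θ, mul_comm θ, mul_comm θ]; exact hpq
    linear_combination (-1:ℝ) * hpq'
  rw [intervalIntegral.integral_congr key]
  have i1 : IntervalIntegrable (fun θ => Real.cos ((d:ℝ) * θ) / (Real.cos θ - z) * (1/2))
      MeasureTheory.volume 0 π := ((contC hz _).mul continuous_const).intervalIntegrable _ _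
  have i2 : IntervalIntegrable
      (fun θ => Real.cos ((((n+m+2):ℕ):ℝ) * θ) / (Real.cos θ - z) * (1/2))
      MeasureTheory.volume 0 π := ((contC hz _).mul continuous_const).intervalIntegrable _ _
  rw [intervalIntegral.integral_sub i1 i2, intervalIntegral.integral_mul_const,
    intervalIntegral.integral_mul_const, intC hz hs0 hs2 d, intC hz hs0 hs2 (n+m+2)]
  field_simp
  ring
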